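/- For fixed v ∈ (0,1) and σ > 0, the map p ↦ γ_SE(v,p) := [γ̂_SE(v,p)]^{-1} − v^{-1}, where γ̂_SE(v,p) = (1/N) Σᵢ 1/(v^{-1} + σ^{-2} p_i σ_i²), is concave on the domain {p : p_i ≥ 0}. -/
import Mathlib

/-- Key inequality: the harmonic-type function `(∑ 1/z i)⁻¹` is concave, via Cauchy–Schwarz. -/
lemma harmonic_key {N : ℕ} (z w : Fin N → ℝ) (hN : 0 < N)
    (hz : ∀ i, 0 < z i) (hw : ∀ i, 0 < w i)
    (a b : ℝ) (ha : 0 ≤ a) (hb : 0 ≤ b) (hab : a + b = 1) :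
    a * (∑ i, 1 / z i)⁻¹ + b * (∑ i, 1 / w i)⁻¹ ≤ (∑ i, 1 / (a * z i + b * w i))⁻¹ := by
  have hu : ∀ i, 0 < a * z i + b * w i := by
    intro i
    rcases lt_or_eq_of_le ha with h | h
    · have : 0 ≤ b * w i := mul_nonneg hb (hw i).le
      nlinarith [hz i]
    · have hb1 : b = 1 := by linarith
      simp [← h, hb1, hw i]
  have hNe : (Finset.univ : Finset (Fin N)).Nonempty := by
    simpa [Finset.univ_nonempty_iff, ← Fin.pos_iff_nonempty]
  have hA : 0 < ∑ i, 1 / z i :=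
    Finset.sum_pos (fun i _ => one_div_pos.mpr (hz i)) hNe
  have hB : 0 < ∑ i, 1 / w i :=
    Finset.sum_pos (fun i _ => one_div_pos.mpr (hw i)) hNe
  have hC : 0 < ∑ i, 1 / (a * z i + b * w i) :=
    Finset.sum_pos (fun i _ => by have := hu i; positivity) hNe
  set C : ℝ := ∑ i, 1 / (a * z i + b * w i) with hCdef
  set t : Fin N → ℝ := fun i => (1 / (a * z i + b * w i)) / C with ht
  have hts : ∑ i, t i = 1 := by
    rw [ht]
    simp only
    rw [← Finset.sum_div]
    exact div_self (ne_of_gt hC)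
  -- Cauchy–Schwarz bound for a positive family x
  have cs : ∀ (x : Fin N → ℝ), (∀ i, 0 < x i) →
      (∑ i, 1 / x i)⁻¹ ≤ ∑ i, (t i) ^ 2 * x i := by
    intro x hx
    have key := Finset.sum_mul_sq_le_sq_mul_sq Finset.univ
      (fun i => t i * Real.sqrt (x i)) (fun i => 1 / Real.sqrt (x i))
    have h1 : ∀ i : Fin N, t i * Real.sqrt (x i) * (1 / Real.sqrt (x i)) = t i := by
      intro i
      have : Real.sqrt (x i) ≠ 0 := Real.sqrt_ne_zero'.mpr (hx i)
      field_simp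
    have h2 : ∀ i : Fin N, (t i * Real.sqrt (x i)) ^ 2 = (t i) ^ 2 * x i := by
      intro i
      rw [mul_pow, Real.sq_sqrt (hx i).le]
    have h3 : ∀ i : Fin N, (1 / Real.sqrt (x i)) ^ 2 = 1 / x i := by
      intro i
      rw [div_pow, one_pow, Real.sq_sqrt (hx i).le]
    simp only [h1, h2, h3] at key
    rw [hts] at key
    have hX : 0 < ∑ i, 1 / x i := Finset.sum_pos (fun i _ => one_div_pos.mpr (hx i)) hNe
    have hS : 0 < ∑ i, (t i) ^ 2 * x i := by
      have : (1 : ℝ) ^ 2 ≤ (∑ i, (t i) ^ 2 * x i) * ∑ i, 1 / x i := key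
      nlinarith
    rw [inv_le_iff_one_le_mul₀ hX] -- maybe wrong name; adjust below
    nlinarith
  have csz := cs z hz
  have csw := cs w hw
  have final : a * (∑ i, 1 / z i)⁻¹ + b * (∑ i, 1 / w i)⁻¹
      ≤ ∑ i, (t i) ^ 2 * (a * z i + b * w i) := by
    have : ∑ i, (t i) ^ 2 * (a * z i + b * w i)
        = a * (∑ i, (t i) ^ 2 * z i) + b * (∑ i, (t i) ^ 2 * w i) := by
      rw [Finset.mul_sum, Finset.mul_sum, ← Finset.sum_add_distrib]
      apply Finset.sum_congr rfl
      intro i _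
      ring
    rw [this]
    exact add_le_add (mul_le_mul_of_nonneg_left csz ha) (mul_le_mul_of_nonneg_left csw hb)
  refine final.trans (le_of_eq ?_)
  have : ∑ i, (t i) ^ 2 * (a * z i + b * w i) = ∑ i, t i * (1 / C) := by
    apply Finset.sum_congr rfl
    intro i _
    have hui := hu i
    rw [ht]
    simp only
    field_simp
  rw [this, ← Finset.sum_mul, hts, one_mul, one_div]

/-- For fixed `v ∈ (0,1)` and `σ > 0`, the map
`p ↦ γ_SE(v,p) = [γ̂_SE(v,p)]⁻¹ − v⁻¹`, with
`γ̂_SE(v,p) = (1/N) Σᵢ 1/(v⁻¹ + σ⁻² pᵢ σᵢ²)`, is concave on the nonnegative orthant. -/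
theorem gammaSE_concave {N : ℕ} [NeZero N] (σs : Fin N → ℝ) (hσs : ∀ i, 0 ≤ σs i)
    (v σ : ℝ) (hv : v ∈ Set.Ioo (0 : ℝ) 1) (hσ : 0 < σ) :
    ConcaveOn ℝ {p : Fin N → ℝ | ∀ i, 0 ≤ p i}
      (fun p => ((1 / (N : ℝ)) * ∑ i, 1 / (v⁻¹ + σ⁻¹ ^ 2 * p i * σs i ^ 2))⁻¹ - v⁻¹) := by
  obtain ⟨hv0, hv1⟩ := hv
  have hvinv : 0 < v⁻¹ := by positivity
  have hN : 0 < N := Nat.pos_of_ne_zero (NeZero.ne N)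
  have hNR : (0 : ℝ) < N := by exact_mod_cast hN
  constructor
  · intro x hx y hy a b ha hb hab
    intro i
    have := hx i; have := hy i
    simp only [Pi.add_apply, Pi.smul_apply, smul_eq_mul]
    positivity
  · intro x hx y hy a b ha hb hab
    simp only [Pi.add_apply, Pi.smul_apply, smul_eq_mul]
    -- define the affine arguments
    set z : Fin N → ℝ := fun i => v⁻¹ + σ⁻¹ ^ 2 * x i * σs i ^ 2 with hzd
    set w : Fin N → ℝ := fun i => v⁻¹ + σ⁻¹ ^ 2 * y i * σs i ^ 2 with hwd
    have hz : ∀ i, 0 < z i := fun i => by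
      have := hx i; rw [hzd]; positivity
    have hw : ∀ i, 0 < w i := fun i => by
      have := hy i; rw [hwd]; positivity
    have haff : ∀ i, v⁻¹ + σ⁻¹ ^ 2 * (a * x i + b * y i) * σs i ^ 2
        = a * z i + b * w i := by
      intro i
      rw [hzd, hwd]
      simp only
      nlinarith [hab]
    have key := harmonic_key z w hN hz hw a b ha hb hab
    have hinv : ∀ (S : ℝ), ((1 / (N : ℝ)) * S)⁻¹ = N * S⁻¹ := by
      intro S
      rw [mul_inv, one_div, inv_inv]
    simp only [haff, hinv]
    have : a * (N * (∑ i, 1 / z i)⁻¹) + b * (N * (∑ i, 1 / w i)⁻¹)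
        = N * (a * (∑ i, 1 / z i)⁻¹ + b * (∑ i, 1 / w i)⁻¹) := by ring
    nlinarith [mul_le_mul_of_nonneg_left key hNR.le]
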